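/- For a real parameter c > 1, define μ₀(c) = ∫₀¹ (1/(π√(p(1−p)))) · [ p²·ln(1 + (1−p)/(c·p)) + 2p(1−p)·ln(1 − 1/c) + (1−p)²·ln(1 + p/(c·(1−p))) ] dp. Then lim_{c→∞} c²·μ₀(c) = −1/2. -/

import Mathlib

open Filter MeasureTheory intervalIntegral

section AuxLemmas

open Real Set
open scoped Interval

set_option maxHeartbeats 1000000

private lemma mu0'_log_one_add_le {x : ℝ} (hx : 0 ≤ x) : Real.log (1 + x) ≤ x := by
  have := Real.log_le_sub_one_of_pos (show (0:ℝ) < 1 + x by linarith)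
  linarith

private lemma mu0'_log_one_add_ge {x : ℝ} (hx : 0 ≤ x) : x - x ^ 2 ≤ Real.log (1 + x) := by
  have h1 : Real.log ((1 + x)⁻¹) ≤ (1 + x)⁻¹ - 1 :=
    Real.log_le_sub_one_of_pos (by positivity)
  rw [Real.log_inv] at h1
  have h2 : x / (1 + x) ≤ Real.log (1 + x) := by
    have h4 : 1 - (1 + x)⁻¹ = x / (1 + x) := by field_simp; ring
    linarith
  have h3 : x - x ^ 2 ≤ x / (1 + x) := by
    rw [le_div_iff₀ (by positivity : (0:ℝ) < 1 + x)]
    nlinarith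
  linarith

private lemma mu0'_log_one_sub_ge {u : ℝ} (h0 : 0 ≤ u) (h : u ≤ 1/2) :
    -u - 2 * u ^ 2 ≤ Real.log (1 - u) := by
  have hpos : (0:ℝ) < 1 - u := by linarith
  have h1 : Real.log ((1 - u)⁻¹) ≤ (1 - u)⁻¹ - 1 :=
    Real.log_le_sub_one_of_pos (by positivity)
  rw [Real.log_inv] at h1
  have h2 : (1 - u)⁻¹ - 1 = u / (1 - u) := by field_simp; ring
  have h3 : u / (1 - u) ≤ u + 2 * u ^ 2 := by
    rw [div_le_iff₀ hpos]
    nlinarith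
  linarith

private lemma mu0'_log_one_sub_le {u : ℝ} (h : u < 1) : Real.log (1 - u) ≤ -u := by
  have := Real.log_le_sub_one_of_pos (show (0:ℝ) < 1 - u by linarith)
  linarith

private lemma mu0'_tendsto_T (a : ℝ) :
    Tendsto (fun c : ℝ => c ^ 2 * (Real.log (1 + a / c) - a / c)) atTop (nhds (-(a ^ 2 / 2))) := by
  rw [← tendsto_sub_nhds_zero_iff]
  have h0 : Tendsto (fun c : ℝ => |a| ^ 3 / (c - |a|)) atTop (nhds 0) :=
    Tendsto.div_atTop tendsto_const_nhds (tendsto_atTop_add_const_right _ _ tendsto_id)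
  apply squeeze_zero_norm' _ h0
  filter_upwards [eventually_gt_atTop (|a| + 1)] with c hc
  have ha : (0:ℝ) ≤ |a| := abs_nonneg a
  have hc0 : (0:ℝ) < c := by linarith
  have hx : |(-(a / c))| < 1 := by
    rw [abs_neg, abs_div, abs_of_pos hc0, div_lt_one hc0]; linarith
  have hb := Real.abs_log_sub_add_sum_range_le hx 2
  have hsum : (∑ i ∈ Finset.range 2, (-(a / c)) ^ (i + 1) / (i + 1)) =
      -(a / c) + (a / c) ^ 2 / 2 := by
    simp [Finset.sum_range_succ]
    ring
  rw [hsum, sub_neg_eq_add] at hb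
  have key : c ^ 2 * (Real.log (1 + a / c) - a / c) - -(a ^ 2 / 2) =
      c ^ 2 * (-(a / c) + (a / c) ^ 2 / 2 + Real.log (1 + a / c)) := by
    field_simp
    ring
  rw [Real.norm_eq_abs, key, abs_mul, abs_of_nonneg (by positivity : (0:ℝ) ≤ c ^ 2)]
  calc c ^ 2 * |(-(a / c) + (a / c) ^ 2 / 2 + Real.log (1 + a / c))|
      ≤ c ^ 2 * (|(-(a / c))| ^ (2 + 1) / (1 - |(-(a / c))|)) := by
        exact mul_le_mul_of_nonneg_left hb (by positivity)
    _ = |a| ^ 3 / (c - |a|) := by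
        rw [abs_neg, abs_div, abs_of_pos hc0, div_pow]
        have h1 : c - |a| > 0 := by linarith
        field_simp

private lemma mu0'_tendsto_key {p : ℝ} (hp0 : 0 < p) (hp1 : p < 1) :
    Tendsto (fun c : ℝ => c ^ 2 *
      (p ^ 2 * Real.log (1 + (1 - p) / (c * p))
        + 2 * p * (1 - p) * Real.log (1 - 1 / c)
        + (1 - p) ^ 2 * Real.log (1 + p / (c * (1 - p))))) atTop (nhds (-(1/2))) := by
  have hq : (0:ℝ) < 1 - p := by linarith
  have h := ((mu0'_tendsto_T ((1-p)/p)).const_mul (p^2)).add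
    (((mu0'_tendsto_T (-1)).const_mul (2*p*(1-p))).add
      ((mu0'_tendsto_T (p/(1-p))).const_mul ((1-p)^2)))
  have hval : p^2 * -(((1-p)/p)^2/2) + (2*p*(1-p) * -((-1:ℝ)^2/2)
      + (1-p)^2 * -((p/(1-p))^2/2)) = -(1/2) := by
    field_simp
    ring
  rw [hval] at h
  apply h.congr'
  filter_upwards [eventually_gt_atTop 0] with c hc
  have h1 : (1 - p)/p/c = (1-p)/(c*p) := by rw [div_div, mul_comm]
  have h2 : p/(1-p)/c = p/(c*(1-p)) := by rw [div_div, mul_comm]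
  have h3 : (1:ℝ) + (-1)/c = 1 - 1/c := by ring
  rw [h1, h2, h3]
  set L1 := Real.log (1 + (1-p)/(c*p)) with hL1
  set L2 := Real.log (1 - 1/c) with hL2
  set L3 := Real.log (1 + p/(c*(1-p))) with hL3
  field_simp
  ring

private lemma mu0'_bracket_bound {c p : ℝ} (hc : 2 ≤ c) (hp0 : 0 < p) (hp1 : p < 1) :
    |p ^ 2 * Real.log (1 + (1 - p) / (c * p))
      + 2 * p * (1 - p) * Real.log (1 - 1 / c)
      + (1 - p) ^ 2 * Real.log (1 + p / (c * (1 - p)))| ≤ (3/2) / c ^ 2 := by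
  have hq : (0:ℝ) < 1 - p := by linarith
  have hc0 : (0:ℝ) < c := by linarith
  have hx1 : (0:ℝ) ≤ (1 - p) / (c * p) := by positivity
  have hx2 : (0:ℝ) ≤ p / (c * (1 - p)) := by positivity
  have hu1 : (1:ℝ)/c ≤ 1/2 := by
    rw [div_le_div_iff₀ hc0 (by norm_num)]; linarith
  have hu0 : (0:ℝ) ≤ 1/c := by positivity
  have hL1u : Real.log (1 + (1 - p) / (c * p)) ≤ (1 - p) / (c * p) := mu0'_log_one_add_le hx1
  have hL2u : Real.log (1 - 1/c) ≤ -(1/c) := mu0'_log_one_sub_le (by linarith)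
  have hL3u : Real.log (1 + p / (c * (1 - p))) ≤ p / (c * (1 - p)) := mu0'_log_one_add_le hx2
  have hL1l := mu0'_log_one_add_ge hx1
  have hL2l := mu0'_log_one_sub_ge hu0 hu1
  have hL3l := mu0'_log_one_add_ge hx2
  have e1 : p ^ 2 * ((1 - p) / (c * p)) = p * (1 - p) * (1/c) := by
    field_simp
  have e3 : (1 - p) ^ 2 * (p / (c * (1 - p))) = p * (1 - p) * (1/c) := by
    field_simp
  have e1' : p ^ 2 * ((1 - p) / (c * p) - ((1 - p) / (c * p)) ^ 2)
      = p * (1 - p) * (1/c) - (1 - p) ^ 2 * (1/c^2) := by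
    field_simp
  have e3' : (1 - p) ^ 2 * (p / (c * (1 - p)) - (p / (c * (1 - p))) ^ 2)
      = p * (1 - p) * (1/c) - p ^ 2 * (1/c^2) := by
    field_simp
  have m1u : p ^ 2 * Real.log (1 + (1 - p) / (c * p)) ≤ p * (1 - p) * (1/c) :=
    le_of_le_of_eq (mul_le_mul_of_nonneg_left hL1u (by positivity)) e1
  have m3u : (1 - p) ^ 2 * Real.log (1 + p / (c * (1 - p))) ≤ p * (1 - p) * (1/c) :=
    le_of_le_of_eq (mul_le_mul_of_nonneg_left hL3u (by positivity)) e3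
  have m2u : 2 * p * (1 - p) * Real.log (1 - 1/c) ≤ 2 * p * (1 - p) * (-(1/c)) :=
    mul_le_mul_of_nonneg_left hL2u (by positivity)
  have m1l : p * (1 - p) * (1/c) - (1 - p) ^ 2 * (1/c^2)
      ≤ p ^ 2 * Real.log (1 + (1 - p) / (c * p)) :=
    le_of_eq_of_le e1'.symm (mul_le_mul_of_nonneg_left hL1l (by positivity))
  have m3l : p * (1 - p) * (1/c) - p ^ 2 * (1/c^2)
      ≤ (1 - p) ^ 2 * Real.log (1 + p / (c * (1 - p))) :=
    le_of_eq_of_le e3'.symm (mul_le_mul_of_nonneg_left hL3l (by positivity))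
  have m2l : 2 * p * (1 - p) * (-(1/c) - 2 * (1/c^2))
      ≤ 2 * p * (1 - p) * Real.log (1 - 1/c) := by
    have h9 : (1/c) ^ 2 = 1/c^2 := by rw [div_pow, one_pow]
    have := mul_le_mul_of_nonneg_left hL2l (by positivity : (0:ℝ) ≤ 2 * p * (1 - p))
    rw [h9] at this
    exact this
  rw [abs_le]
  have hpq : p * (1 - p) ≤ 1/4 := by nlinarith [sq_nonneg (p - 1/2)]
  have hgoal : (3:ℝ)/2/c^2 = 3/2 * (1/c^2) := by ring
  have hic2 : (0:ℝ) ≤ 1/c^2 := by positivity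
  constructor
  · have hA : ((1-p)^2 + p^2 + 4*(p*(1-p))) * (1/c^2) ≤ (3/2) * (1/c^2) := by
      apply mul_le_mul_of_nonneg_right ?_ hic2
      nlinarith
    linarith only [m1l, m3l, m2l, hA, hgoal]
  · have hb : (0:ℝ) ≤ 3/2 * (1/c^2) := by positivity
    linarith only [m1u, m2u, m3u, hb, hgoal]

private lemma mu0'_sqrt_ineq {p : ℝ} (hp0 : 0 < p) (hp1 : p < 1) :
    1 / (Real.sqrt p * Real.sqrt (1 - p)) ≤ 1 / Real.sqrt p + 1 / Real.sqrt (1 - p) := by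
  have hq : (0:ℝ) < 1 - p := by linarith
  have hs : 0 < Real.sqrt p := Real.sqrt_pos.2 hp0
  have ht : 0 < Real.sqrt (1 - p) := Real.sqrt_pos.2 hq
  have hs2 : Real.sqrt p ^ 2 = p := Real.sq_sqrt hp0.le
  have ht2 : Real.sqrt (1 - p) ^ 2 = 1 - p := Real.sq_sqrt hq.le
  have hsum : 1 ≤ Real.sqrt p + Real.sqrt (1 - p) := by
    nlinarith [sq_nonneg (Real.sqrt p + Real.sqrt (1 - p))]
  rw [div_add_div _ _ (ne_of_gt hs) (ne_of_gt ht), div_le_div_iff₀ (by positivity) (by positivity)]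
  nlinarith [mul_pos hs ht]

private lemma mu0'_arcsine_integrableOn :
    IntegrableOn (fun p : ℝ => 1 / (Real.pi * Real.sqrt (p * (1 - p)))) (Ioc 0 1) := by
  have i1 : IntervalIntegrable (fun x : ℝ => x ^ (-(1/2) : ℝ)) volume 0 1 :=
    intervalIntegrable_rpow' (by norm_num)
  have i2 : IntervalIntegrable (fun x : ℝ => (1 - x) ^ (-(1/2) : ℝ)) volume 0 1 := by
    have := (i1.comp_sub_left 1).symm
    simpa using this
  have isum := (i1.add i2).div_const Real.pi
  rw [intervalIntegrable_iff_integrableOn_Ioc_of_le zero_le_one] at isum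
  refine MeasureTheory.Integrable.mono isum ?_ ?_
  · have hm : Measurable fun p : ℝ => (Real.pi * Real.sqrt (p * (1 - p)))⁻¹ :=
      ((continuous_const.mul (Real.continuous_sqrt.comp
        (continuous_id.mul (continuous_const.sub continuous_id)))).measurable).inv
    simp only [one_div]
    exact hm.aestronglyMeasurable
  · rw [ae_restrict_iff' measurableSet_Ioc]
    filter_upwards with p hp
    have hp0 : 0 < p := hp.1
    have hrw : ∀ x : ℝ, 0 < x → x ^ (-(1/2) : ℝ) = 1 / Real.sqrt x := by
      intro x hx
      rw [Real.rpow_neg hx.le, one_div, Real.sqrt_eq_rpow]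
      norm_num
    rcases lt_or_eq_of_le hp.2 with hp1 | hp1
    · have hq : (0:ℝ) < 1 - p := by linarith
      have key := mu0'_sqrt_ineq hp0 hp1
      have hs : 0 < Real.sqrt p := Real.sqrt_pos.2 hp0
      have ht : 0 < Real.sqrt (1 - p) := Real.sqrt_pos.2 hq
      rw [Real.norm_eq_abs, Real.norm_eq_abs, Real.sqrt_mul hp0.le]
      rw [abs_of_nonneg (by positivity), abs_of_nonneg (by positivity)]
      rw [hrw p hp0, hrw (1-p) hq]
      have hrew : 1 / (Real.pi * (Real.sqrt p * Real.sqrt (1 - p)))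
          = (1 / (Real.sqrt p * Real.sqrt (1 - p))) / Real.pi := by
        rw [div_div]
        ring_nf
      rw [hrew]
      gcongr
    · subst hp1
      have hL : (1:ℝ) / (Real.pi * Real.sqrt (1 * (1 - 1))) = 0 := by
        norm_num
      rw [hL, norm_zero]
      exact norm_nonneg _

private lemma mu0'_arcsine_integral :
    ∫ p in (0:ℝ)..1, 1 / (Real.pi * Real.sqrt (p * (1 - p))) = 1 := by
  have hpi : (0:ℝ) < Real.pi := Real.pi_pos
  have hpi2 : (0:ℝ) ≤ Real.pi / 2 := by linarith
  set g : ℝ → ℝ := fun p => 1 / (Real.pi * Real.sqrt (p * (1 - p))) with hg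
  have hcomp : ∀ x ∈ Ioo 0 (Real.pi/2),
      (2 * Real.sin x * Real.cos x) • g (Real.sin x ^ 2) = 2 / Real.pi := by
    intro x hx
    have hsin : 0 < Real.sin x := Real.sin_pos_of_pos_of_lt_pi hx.1 (by linarith [hx.2])
    have hcos : 0 < Real.cos x := Real.cos_pos_of_mem_Ioo ⟨by linarith [hx.1], hx.2⟩
    have h1 : (1:ℝ) - Real.sin x ^ 2 = Real.cos x ^ 2 := by
      have := Real.sin_sq_add_cos_sq x; linarith
    have h2 : Real.sqrt (Real.sin x ^ 2 * (1 - Real.sin x ^ 2)) = Real.sin x * Real.cos x := by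
      rw [h1, ← mul_pow, Real.sqrt_sq (by positivity)]
    rw [smul_eq_mul, hg]
    simp only
    rw [h2]
    field_simp
  have hsub : ∫ x in (0:ℝ)..(Real.pi/2),
      (fun θ => 2 * Real.sin θ * Real.cos θ) x • (g ∘ (fun θ => Real.sin θ ^ 2)) x
      = ∫ u in (Real.sin 0 ^ 2 : ℝ)..(Real.sin (Real.pi/2) ^ 2), g u := by
    apply intervalIntegral.integral_comp_smul_deriv'''
    · exact (Real.continuous_sin.pow 2).continuousOn
    · intro x _
      have : HasDerivAt (fun θ => Real.sin θ ^ 2) (2 * Real.sin x * Real.cos x) x := by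
        have := (Real.hasDerivAt_sin x).fun_pow 2
        refine this.congr_deriv ?_
        norm_num
      exact this.hasDerivWithinAt
    · have himg : (fun θ => Real.sin θ ^ 2) ''
          Ioo (min 0 (Real.pi/2)) (max 0 (Real.pi/2)) ⊆ Ioo 0 1 := by
        rw [min_eq_left hpi2, max_eq_right hpi2]
        rintro y ⟨x, hx, rfl⟩
        have hsin : 0 < Real.sin x := Real.sin_pos_of_pos_of_lt_pi hx.1 (by linarith [hx.2])
        have hcos : 0 < Real.cos x := Real.cos_pos_of_mem_Ioo ⟨by linarith [hx.1], hx.2⟩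
        refine ⟨by positivity, ?_⟩
        show Real.sin x ^ 2 < 1
        nlinarith [Real.sin_sq_add_cos_sq x, mul_pos hcos hcos]
      apply ContinuousOn.mono ?_ himg
      apply ContinuousOn.div continuousOn_const
      · exact (continuous_const.mul (Real.continuous_sqrt.comp
          (continuous_id.mul (continuous_const.sub continuous_id)))).continuousOn
      · intro p hp
        have h1 : 0 < p * (1 - p) := mul_pos hp.1 (by linarith [hp.2])
        positivity
    · have himg : (fun θ => Real.sin θ ^ 2) '' [[0, Real.pi/2]] ⊆ Icc 0 1 := by
        rintro y ⟨x, _, rfl⟩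
        refine ⟨sq_nonneg _, ?_⟩
        show Real.sin x ^ 2 ≤ 1
        nlinarith [Real.sin_sq_add_cos_sq x, sq_nonneg (Real.cos x)]
      apply IntegrableOn.mono_set ?_ himg
      rw [integrableOn_Icc_iff_integrableOn_Ioc]
      exact mu0'_arcsine_integrableOn
    · rw [uIcc_of_le hpi2]
      have hae : (fun x => (2 * Real.sin x * Real.cos x) • g (Real.sin x ^ 2))
          =ᵐ[volume.restrict (Icc 0 (Real.pi/2))] (fun _ => 2 / Real.pi) := by
        rw [Filter.EventuallyEq, ae_restrict_iff' measurableSet_Icc]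
        have hne : ∀ᵐ x : ℝ, x ∉ ({0, Real.pi/2} : Set ℝ) :=
          measure_eq_zero_iff_ae_notMem.mp (((Set.finite_singleton _).insert _).measure_zero _)
        filter_upwards [hne] with x hx hmem
        have hio : x ∈ Ioo 0 (Real.pi/2) := by
          rcases hmem with ⟨h1, h2⟩
          rcases lt_or_eq_of_le h1 with h1' | h1'
          · rcases lt_or_eq_of_le h2 with h2' | h2'
            · exact ⟨h1', h2'⟩
            · exact absurd (Or.inr h2') hx
          · exact absurd (Or.inl h1'.symm) hx
        exact hcomp x hio
      exact (integrableOn_const measure_Icc_lt_top.ne).congr hae.symm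
  rw [Real.sin_zero, Real.sin_pi_div_two] at hsub
  norm_num at hsub
  rw [← hsub]
  rw [intervalIntegral.integral_congr_ae ?_ ]
  · show ∫ _ in (0:ℝ)..(Real.pi/2), (2/Real.pi : ℝ) = 1
    rw [intervalIntegral.integral_const, smul_eq_mul]
    field_simp
    ring
  · have hne : ∀ᵐ x : ℝ, x ∉ ({Real.pi/2} : Set ℝ) :=
      measure_eq_zero_iff_ae_notMem.mp ((Set.finite_singleton _).measure_zero _)
    filter_upwards [hne] with x hx hmem
    rw [uIoc_of_le (by linarith : (0:ℝ) ≤ Real.pi/2)] at hmem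
    have hio : x ∈ Ioo 0 (Real.pi/2) := ⟨hmem.1, lt_of_le_of_ne hmem.2 (by simpa using hx)⟩
    exact hcomp x hio

end AuxLemmas

/-- The expected per-segment score `μ₀(c)` of an innocent user under the arcsine bias
distribution, the interleaving attack by `c` colluders, and the interleaving
log-likelihood decoder. -/
noncomputable def mu0 (c : ℝ) : ℝ :=
  ∫ p in (0:ℝ)..1, (1 / (Real.pi * Real.sqrt (p * (1 - p)))) *
    (p ^ 2 * Real.log (1 + (1 - p) / (c * p))
      + 2 * p * (1 - p) * Real.log (1 - 1 / c)
      + (1 - p) ^ 2 * Real.log (1 + p / (c * (1 - p))))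

section Main

open Real Set

set_option maxHeartbeats 1000000

/-- The expected per-segment innocent score under the interleaving log-likelihood decoder
satisfies `μ₀(c) ∼ −1/(2c²)`, i.e. `c²·μ₀(c) → −1/2` as `c → ∞`. -/
theorem mu0_asymptotics :
    Tendsto (fun c : ℝ => c ^ 2 * mu0 c) atTop (nhds (-(1 / 2))) := by
  have harc0 : ∀ p : ℝ, 0 ≤ 1 / (Real.pi * Real.sqrt (p * (1 - p))) := by
    intro p
    have := Real.pi_pos
    positivity
  have harc1 : (1:ℝ) / (Real.pi * Real.sqrt (1 * (1 - 1))) = 0 := by norm_num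
  -- rewrite `c ^ 2 * mu0 c` as a set integral over `Ioc 0 1`
  have hmu : ∀ c : ℝ, c ^ 2 * mu0 c =
      ∫ p in Ioc (0:ℝ) 1, c ^ 2 * ((1 / (Real.pi * Real.sqrt (p * (1 - p)))) *
        (p ^ 2 * Real.log (1 + (1 - p) / (c * p))
          + 2 * p * (1 - p) * Real.log (1 - 1 / c)
          + (1 - p) ^ 2 * Real.log (1 + p / (c * (1 - p))))) := by
    intro c
    rw [mu0, intervalIntegral.integral_of_le zero_le_one, MeasureTheory.integral_const_mul]
  have hDCT := MeasureTheory.tendsto_integral_filter_of_dominated_convergence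
    (μ := volume.restrict (Ioc (0:ℝ) 1)) (l := (atTop : Filter ℝ))
    (F := fun c p => c ^ 2 * ((1 / (Real.pi * Real.sqrt (p * (1 - p)))) *
        (p ^ 2 * Real.log (1 + (1 - p) / (c * p))
          + 2 * p * (1 - p) * Real.log (1 - 1 / c)
          + (1 - p) ^ 2 * Real.log (1 + p / (c * (1 - p))))))
    (f := fun p => (1 / (Real.pi * Real.sqrt (p * (1 - p)))) * (-(1/2)))
    (bound := fun p => (3/2) * (1 / (Real.pi * Real.sqrt (p * (1 - p)))))
    ?_ ?_ ?_ ?_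
  · -- conclude
    have hval : ∫ p in Ioc (0:ℝ) 1,
        (1 / (Real.pi * Real.sqrt (p * (1 - p)))) * (-(1/2)) = -(1/2) := by
      rw [MeasureTheory.integral_mul_const, ← intervalIntegral.integral_of_le zero_le_one,
        mu0'_arcsine_integral, one_mul]
    rw [hval] at hDCT
    exact hDCT.congr (fun c => (hmu c).symm)
  · -- measurability
    filter_upwards with c
    apply Measurable.aestronglyMeasurable
    apply Measurable.const_mul
    apply Measurable.mul
    · have hm : Measurable fun p : ℝ => (Real.pi * Real.sqrt (p * (1 - p)))⁻¹ :=
        ((continuous_const.mul (Real.continuous_sqrt.comp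
          (continuous_id.mul (continuous_const.sub continuous_id)))).measurable).inv
      simpa [one_div] using hm
    · have hm1 : Measurable fun p : ℝ => Real.log (1 + (1 - p) / (c * p)) :=
        Real.measurable_log.comp (measurable_const.add
          ((measurable_const.sub measurable_id).div (measurable_const.mul measurable_id)))
      have hm3 : Measurable fun p : ℝ => Real.log (1 + p / (c * (1 - p))) :=
        Real.measurable_log.comp (measurable_const.add
          (measurable_id.div (measurable_const.mul (measurable_const.sub measurable_id))))
      exact (((measurable_id.pow_const 2).mul hm1).add
        (((measurable_const.mul measurable_id).mul (measurable_const.sub measurable_id)).mul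
          measurable_const)).add
        (((measurable_const.sub measurable_id).pow_const 2).mul hm3)
  · -- uniform bound
    filter_upwards [eventually_ge_atTop (2:ℝ)] with c hc
    rw [ae_restrict_iff' measurableSet_Ioc]
    filter_upwards with p hp
    have hc0 : (0:ℝ) < c := by linarith
    rcases lt_or_eq_of_le hp.2 with hp1 | hp1
    · have hbd := mu0'_bracket_bound hc hp.1 hp1
      have hfpos := harc0 p
      rw [Real.norm_eq_abs, abs_mul, abs_mul,
        abs_of_nonneg (by positivity : (0:ℝ) ≤ c ^ 2), abs_of_nonneg hfpos]
      calc c ^ 2 * ((1 / (Real.pi * Real.sqrt (p * (1 - p)))) * |_|)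
          ≤ c ^ 2 * ((1 / (Real.pi * Real.sqrt (p * (1 - p)))) * ((3/2) / c ^ 2)) := by
            gcongr
        _ = (3/2) * (1 / (Real.pi * Real.sqrt (p * (1 - p)))) := by
            have h : ∀ A : ℝ, c ^ 2 * (A * ((3/2)/c^2)) = (3/2) * A := by
              intro A
              field_simp
            exact h _
    · subst hp1
      rw [harc1]
      simp only [zero_mul, mul_zero, norm_zero]
      positivity
  · -- integrability of the bound
    exact mu0'_arcsine_integrableOn.const_mul _
  · -- pointwise limit
    rw [ae_restrict_iff' measurableSet_Ioc]
    filter_upwards with p hp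
    rcases lt_or_eq_of_le hp.2 with hp1 | hp1
    · have hk := (mu0'_tendsto_key hp.1 hp1).const_mul
        (1 / (Real.pi * Real.sqrt (p * (1 - p))))
      apply hk.congr
      intro c
      ring
    · subst hp1
      rw [harc1]
      simp only [zero_mul, mul_zero]
      exact tendsto_const_nhds

end Main
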